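/- Let q be a positive integer and a > 0, c > 0. Then limsup_{n→∞} (n log n)/(n log|c|⁻¹ + log Γ(n+1) + log Γ(qn+a)) = 1/(1+q). -/

import Mathlib

open Filter Real Topology Nat

private lemma nlogn_atTop : Tendsto (fun n : ℕ => (n : ℝ) * Real.log n) atTop atTop :=
  tendsto_natCast_atTop_atTop.atTop_mul_atTop₀
    (Real.tendsto_log_atTop.comp tendsto_natCast_atTop_atTop)

private lemma logn_atTop : Tendsto (fun n : ℕ => Real.log n) atTop atTop :=
  Real.tendsto_log_atTop.comp tendsto_natCast_atTop_atTop

private lemma log_factorial_asymp :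
    Tendsto (fun n : ℕ => Real.log (n !) / ((n : ℝ) * Real.log n)) atTop (𝓝 1) := by
  have hs : Tendsto (fun n : ℕ => Real.log (Stirling.stirlingSeq n)) atTop
      (𝓝 (Real.log (Real.sqrt Real.pi))) :=
    (Real.continuousAt_log (by positivity)).tendsto.comp Stirling.tendsto_stirlingSeq_sqrt_pi
  have t1 : Tendsto (fun n : ℕ => Real.log (Stirling.stirlingSeq n) / ((n : ℝ) * Real.log n))
      atTop (𝓝 0) := hs.div_atTop nlogn_atTop
  have t2 : Tendsto (fun n : ℕ => (1/2 : ℝ) * Real.log 2 / ((n : ℝ) * Real.log n)) atTop (𝓝 0) :=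
    tendsto_const_nhds.div_atTop nlogn_atTop
  have t3 : Tendsto (fun n : ℕ => (1/2 : ℝ) / (n : ℝ)) atTop (𝓝 0) :=
    tendsto_const_nhds.div_atTop tendsto_natCast_atTop_atTop
  have t4 : Tendsto (fun n : ℕ => (1 : ℝ) - 1 / Real.log n) atTop (𝓝 (1 - 0)) :=
    tendsto_const_nhds.sub (tendsto_const_nhds.div_atTop logn_atTop)
  have := ((t1.add t2).add t3).add t4
  simp only [zero_add, add_zero, sub_zero] at this
  refine this.congr' ?_
  filter_upwards [eventually_ge_atTop 2] with n hn
  have hn0 : (0:ℝ) < n := by exact_mod_cast Nat.lt_of_lt_of_le (by norm_num) hn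
  have hL : (0:ℝ) < Real.log n := Real.log_pos (by exact_mod_cast hn)
  have hden : (0:ℝ) < Real.sqrt (2 * n) * ((n : ℝ) / Real.exp 1) ^ n := by positivity
  have hfac : (n ! : ℝ) = Stirling.stirlingSeq n *
      (Real.sqrt (2 * n) * ((n : ℝ) / Real.exp 1) ^ n) := by
    rw [Stirling.stirlingSeq]; field_simp
  have key : Real.log (n !) = Real.log (Stirling.stirlingSeq n) + (1/2) * Real.log 2 +
      (1/2) * Real.log n + n * (Real.log n - 1) := by
    have hspos : (0:ℝ) < Stirling.stirlingSeq n := by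
      have := Stirling.stirlingSeq'_pos (n - 1)
      rwa [Nat.sub_add_cancel (by omega)] at this
    rw [hfac, Real.log_mul hspos.ne' hden.ne', Real.log_mul (by positivity) (by positivity),
      Real.log_sqrt (by positivity), Real.log_pow, Real.log_mul (by norm_num) hn0.ne',
      Real.log_div hn0.ne' (Real.exp_ne_zero 1), Real.log_exp]
    ring
  rw [key]
  field_simp

/-- If `k n / n → r > 0` then `log (k n)! / (n log n) → r`. -/
private lemma fac_asymp (r : ℝ) (hr : 0 < r) (k : ℕ → ℕ)
    (hk : Tendsto (fun n : ℕ => (k n : ℝ) / n) atTop (𝓝 r)) :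
    Tendsto (fun n : ℕ => Real.log ((k n)!) / ((n : ℝ) * Real.log n)) atTop (𝓝 r) := by
  have hbig : ∀ᶠ n : ℕ in atTop, (r / 2) * n ≤ (k n : ℝ) := by
    have := hk.eventually (eventually_ge_nhds (show r/2 < r by linarith))
    filter_upwards [this, eventually_ge_atTop 1] with n h1 h2
    have hn0 : (0:ℝ) < n := by exact_mod_cast h2
    calc (r/2) * n ≤ ((k n : ℝ)/n) * n := by gcongr
      _ = (k n : ℝ) := by field_simp
  have hktop : Tendsto k atTop atTop := by
    rw [← tendsto_natCast_atTop_iff (R := ℝ)]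
    refine tendsto_atTop_mono' _ hbig ?_
    exact (tendsto_natCast_atTop_atTop.const_mul_atTop (by positivity))
  have hA : Tendsto (fun n : ℕ => Real.log ((k n)!) / ((k n : ℝ) * Real.log (k n)))
      atTop (𝓝 1) := log_factorial_asymp.comp hktop
  have hsmall : Tendsto (fun n : ℕ => Real.log ((k n : ℝ) / n) / Real.log n) atTop (𝓝 0) :=
    (((Real.continuousAt_log hr.ne').tendsto.comp hk)).div_atTop logn_atTop
  have hG : Tendsto (fun n : ℕ =>
      (Real.log ((k n)!) / ((k n : ℝ) * Real.log (k n))) *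
        (((k n : ℝ) / n) * (1 + Real.log ((k n : ℝ) / n) / Real.log n)))
      atTop (𝓝 (1 * (r * (1 + 0)))) :=
    hA.mul (hk.mul (tendsto_const_nhds.add hsmall))
  rw [show (1 : ℝ) * (r * (1 + 0)) = r by ring] at hG
  refine hG.congr' ?_
  filter_upwards [eventually_ge_atTop 2, hktop.eventually (eventually_ge_atTop 2)]
    with n hn hkn
  have hn0 : (0:ℝ) < n := by exact_mod_cast Nat.lt_of_lt_of_le (by norm_num) hn
  have hk0 : (0:ℝ) < k n := by exact_mod_cast Nat.lt_of_lt_of_le (by norm_num) hkn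
  have hL : (0:ℝ) < Real.log n := Real.log_pos (by exact_mod_cast hn)
  have hM : (0:ℝ) < Real.log (k n) := Real.log_pos (by exact_mod_cast hkn)
  rw [Real.log_div hk0.ne' hn0.ne']
  field_simp
  ring

theorem stmt_4 (q : ℕ) (hq : 1 ≤ q) (a c : ℝ) (ha : 0 < a) (hc : 0 < c) :
    Filter.limsup
      (fun n : ℕ =>
        ((n : ℝ) * Real.log n) /
          ((n : ℝ) * Real.log (|c|⁻¹) + Real.log (Real.Gamma ((n : ℝ) + 1)) +
            Real.log (Real.Gamma ((q : ℝ) * n + a))))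
      Filter.atTop = 1 / (1 + (q : ℝ)) := by
  set r₀ : ℝ := Real.log (|c|⁻¹) with hr₀
  set m : ℕ := ⌈a⌉₊ with hm
  have ham : a ≤ m := Nat.le_ceil a
  have hq' : (1:ℝ) ≤ q := by exact_mod_cast hq
  -- lower factorial sequence
  have hlow : Tendsto (fun n : ℕ => Real.log ((q * n - 1)!) / ((n : ℝ) * Real.log n))
      atTop (𝓝 q) := by
    refine fac_asymp q (by linarith) _ ?_
    have : Tendsto (fun n : ℕ => (q : ℝ) - 1 / n) atTop (𝓝 ((q : ℝ) - 0)) :=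
      tendsto_const_nhds.sub (tendsto_const_nhds.div_atTop tendsto_natCast_atTop_atTop)
    rw [sub_zero] at this
    refine this.congr' ?_
    filter_upwards [eventually_ge_atTop 1] with n hn
    have hn0 : (0:ℝ) < n := by exact_mod_cast hn
    have h1 : 1 ≤ q * n := Nat.one_le_iff_ne_zero.2 (by positivity)
    have : ((q * n - 1 : ℕ) : ℝ) = (q : ℝ) * n - 1 := by
      push_cast [Nat.cast_sub h1]; ring
    rw [this]; field_simp
  -- upper factorial sequence
  have hhigh : Tendsto (fun n : ℕ => Real.log ((q * n + m)!) / ((n : ℝ) * Real.log n))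
      atTop (𝓝 q) := by
    refine fac_asymp q (by linarith) _ ?_
    have : Tendsto (fun n : ℕ => (q : ℝ) + (m : ℝ) / n) atTop (𝓝 ((q : ℝ) + 0)) :=
      tendsto_const_nhds.add (tendsto_const_nhds.div_atTop tendsto_natCast_atTop_atTop)
    rw [add_zero] at this
    refine this.congr' ?_
    filter_upwards [eventually_ge_atTop 1] with n hn
    have hn0 : (0:ℝ) < n := by exact_mod_cast hn
    push_cast
    field_simp
  -- third term by squeeze
  have hterm3 : Tendsto (fun n : ℕ =>
      Real.log (Real.Gamma ((q : ℝ) * n + a)) / ((n : ℝ) * Real.log n)) atTop (𝓝 q) := by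
    refine tendsto_of_tendsto_of_tendsto_of_le_of_le' hlow hhigh ?_ ?_
    · filter_upwards [eventually_ge_atTop 2] with n hn
      have hn0 : (0:ℝ) < n := by exact_mod_cast Nat.lt_of_lt_of_le (by norm_num) hn
      have hL : (0:ℝ) < Real.log n := Real.log_pos (by exact_mod_cast hn)
      have h2qn : (2:ℝ) ≤ (q:ℝ) * n := by
        calc (2:ℝ) ≤ (n:ℝ) := by exact_mod_cast hn
          _ = 1 * n := (one_mul _).symm
          _ ≤ (q:ℝ) * n := by gcongr
      have hGmono : Real.Gamma ((q:ℝ) * n) ≤ Real.Gamma ((q:ℝ) * n + a) :=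
        Real.Gamma_strictMonoOn_Ici.monotoneOn (by exact h2qn) (by simp; linarith)
          (by linarith)
      have heq : Real.Gamma ((q:ℝ) * n) = ((q * n - 1)! : ℝ) := by
        have h1 : 1 ≤ q * n := Nat.one_le_iff_ne_zero.2 (by positivity)
        rw [← Real.Gamma_nat_eq_factorial]
        congr 1
        push_cast [Nat.cast_sub h1]; ring
      rw [← heq]
      exact (div_le_div_iff_of_pos_right (by positivity)).2
        (Real.log_le_log (Real.Gamma_pos_of_pos (by linarith)) hGmono)
    · filter_upwards [eventually_ge_atTop 2] with n hn
      have hn0 : (0:ℝ) < n := by exact_mod_cast Nat.lt_of_lt_of_le (by norm_num) hn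
      have hL : (0:ℝ) < Real.log n := Real.log_pos (by exact_mod_cast hn)
      have h2qn : (2:ℝ) ≤ (q:ℝ) * n := by
        calc (2:ℝ) ≤ (n:ℝ) := by exact_mod_cast hn
          _ = 1 * n := (one_mul _).symm
          _ ≤ (q:ℝ) * n := by gcongr
      have hGmono : Real.Gamma ((q:ℝ) * n + a) ≤ Real.Gamma ((q:ℝ) * n + m + 1) :=
        Real.Gamma_strictMonoOn_Ici.monotoneOn (by simp; linarith)
          (by simp; linarith) (by linarith)
      have heq : Real.Gamma ((q:ℝ) * n + m + 1) = ((q * n + m)! : ℝ) := by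
        rw [← Real.Gamma_nat_eq_factorial]
        congr 1
        push_cast; ring
      rw [← heq]
      exact (div_le_div_iff_of_pos_right (by positivity)).2
        (Real.log_le_log (Real.Gamma_pos_of_pos (by linarith)) hGmono)
  -- term 1 and 2
  have hterm1 : Tendsto (fun n : ℕ => r₀ / Real.log n) atTop (𝓝 0) :=
    tendsto_const_nhds.div_atTop logn_atTop
  have hterm2 : Tendsto (fun n : ℕ =>
      Real.log (Real.Gamma ((n : ℝ) + 1)) / ((n : ℝ) * Real.log n)) atTop (𝓝 1) := by
    refine log_factorial_asymp.congr' ?_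
    filter_upwards with n
    rw [show ((n : ℝ) + 1) = ((n : ℕ) + 1 : ℝ) by push_cast; ring,
      Real.Gamma_nat_eq_factorial]
  -- denominator over n log n
  have hD : Tendsto (fun n : ℕ =>
      ((n : ℝ) * r₀ + Real.log (Real.Gamma ((n : ℝ) + 1)) +
        Real.log (Real.Gamma ((q : ℝ) * n + a))) / ((n : ℝ) * Real.log n))
      atTop (𝓝 (0 + 1 + q)) := by
    have := (hterm1.add hterm2).add hterm3
    refine this.congr' ?_
    filter_upwards [eventually_ge_atTop 2] with n hn
    have hn0 : (0:ℝ) < n := by exact_mod_cast Nat.lt_of_lt_of_le (by norm_num) hn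
    have hL : (0:ℝ) < Real.log n := Real.log_pos (by exact_mod_cast hn)
    field_simp
  rw [show (0:ℝ) + 1 + q = 1 + q by ring] at hD
  have h1q : (0:ℝ) < 1 + q := by linarith
  have hinv : Tendsto (fun n : ℕ =>
      (((n : ℝ) * r₀ + Real.log (Real.Gamma ((n : ℝ) + 1)) +
        Real.log (Real.Gamma ((q : ℝ) * n + a))) / ((n : ℝ) * Real.log n))⁻¹)
      atTop (𝓝 (1 + (q:ℝ))⁻¹) := hD.inv₀ h1q.ne'
  have hfinal : Tendsto
      (fun n : ℕ =>
        ((n : ℝ) * Real.log n) /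
          ((n : ℝ) * Real.log (|c|⁻¹) + Real.log (Real.Gamma ((n : ℝ) + 1)) +
            Real.log (Real.Gamma ((q : ℝ) * n + a))))
      atTop (𝓝 (1 / (1 + (q : ℝ)))) := by
    rw [one_div]
    refine hinv.congr (fun n => ?_)
    rw [inv_div]
  exact hfinal.limsup_eq
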